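/- Let n ≥ 2 and let λ ∈ ℂ with λ^(n+1) ≠ 1. Then the hypersurface X_λ in ℙ^n defined by F_λ = Σ_{i=1}^{n+1} x_i^{n+1} − (n+1)λ ∏_{j=1}^{n+1} x_j is smooth, i.e., the polynomial F_λ and its partial derivatives have no common zero in ℂ^{n+1} \ {0}. -/
import Mathlib


/-- The Dwork polynomial `F_λ = ∑ x_i^(n+1) - (n+1) λ ∏ x_j` evaluated at `x`. -/
noncomputable def dworkF (n : ℕ) (lam : ℂ) (x : Fin (n + 1) → ℂ) : ℂ :=
  (∑ i, x i ^ (n + 1)) - (n + 1) * lam * ∏ j, x j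

/-- The partial derivative `∂F_λ/∂x_k = (n+1) x_k^n - (n+1) λ ∏_{j≠k} x_j` evaluated at `x`. -/
noncomputable def dworkPartial (n : ℕ) (lam : ℂ) (k : Fin (n + 1)) (x : Fin (n + 1) → ℂ) : ℂ :=
  (n + 1) * x k ^ n - (n + 1) * lam * ∏ j ∈ Finset.univ.erase k, x j

/-- for `n ≥ 2` and `λ^(n+1) ≠ 1`, the Dwork hypersurface is smooth:
`F_λ` and its partial derivatives have no common zero in `ℂ^(n+1) \ {0}`. -/
theorem dwork_smooth_of_pow_ne_one (n : ℕ) (hn : 2 ≤ n) (lam : ℂ)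
    (hlam : lam ^ (n + 1) ≠ 1) :
    ∀ x : Fin (n + 1) → ℂ, x ≠ 0 →
      ¬(dworkF n lam x = 0 ∧ ∀ k : Fin (n + 1), dworkPartial n lam k x = 0) := by
  intro x hx ⟨hF, hP⟩
  have hn1 : ((n : ℂ) + 1) ≠ 0 := by
    exact_mod_cast Nat.cast_add_one_ne_zero (R := ℂ) n
  -- From each partial derivative: x k ^ n = lam * ∏_{j≠k} x j
  have hpow : ∀ k : Fin (n + 1), x k ^ n = lam * ∏ j ∈ Finset.univ.erase k, x j := by
    intro k
    have h := hP k
    unfold dworkPartial at h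
    have h' : ((n : ℂ) + 1) * (x k ^ n) = ((n : ℂ) + 1) * (lam * ∏ j ∈ Finset.univ.erase k, x j) := by
      ring_nf
      ring_nf at h
      linear_combination h
    exact mul_left_cancel₀ hn1 h'
  -- Multiply by x k : x k ^ (n+1) = lam * ∏ x j
  have hpow1 : ∀ k : Fin (n + 1), x k ^ (n + 1) = lam * ∏ j, x j := by
    intro k
    have : x k ^ (n + 1) = x k * x k ^ n := by ring
    rw [this, hpow k, ← mul_assoc, mul_comm (x k) lam, mul_assoc,
      Finset.mul_prod_erase _ _ (Finset.mem_univ k)]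
  by_cases hz : lam * ∏ j, x j = 0
  · -- then all x k = 0
    apply hx
    funext k
    have : x k ^ (n + 1) = 0 := by rw [hpow1 k, hz]
    simpa using pow_eq_zero_iff (Nat.succ_ne_zero n) |>.mp this
  · -- product of all equations
    have hprod : (∏ j, x j) ^ (n + 1) = lam ^ (n + 1) * (∏ j, x j) ^ (n + 1) := by
      calc (∏ j, x j) ^ (n + 1) = ∏ k : Fin (n + 1), x k ^ (n + 1) := by
            rw [← Finset.prod_pow]
        _ = ∏ _k : Fin (n + 1), (lam * ∏ j, x j) := by
            exact Finset.prod_congr rfl fun k _ => hpow1 k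
        _ = (lam * ∏ j, x j) ^ (n + 1) := by
            rw [Finset.prod_const, Finset.card_univ, Fintype.card_fin]
        _ = lam ^ (n + 1) * (∏ j, x j) ^ (n + 1) := by ring
    have hP0 : (∏ j, x j) ^ (n + 1) ≠ 0 := by
      intro h
      apply hz
      have : (∏ j, x j) = 0 := pow_eq_zero_iff (Nat.succ_ne_zero n) |>.mp h
      rw [this, mul_zero]
    apply hlam
    have hkey : (lam ^ (n + 1) - 1) * (∏ j, x j) ^ (n + 1) = 0 := by
      linear_combination -hprod
    rcases mul_eq_zero.mp hkey with h | h
    · exact sub_eq_zero.mp h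
    · exact absurd h hP0
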